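/- arXiv:1012.1261 — 4 statements merged into one kernel-verified Lean document; each statement's English description precedes it below -/
import Mathlib

section
/- The system m̄ = tanh(2β(1-α)n̄ + h₁), n̄ = tanh(2βα m̄ + h₂) with α∈(0,1), β>0, h₁>0, h₂>0 has a unique solution with m̄ ≥ 0 and n̄ ≥ 0, and this solution satisfies m̄ > 0, n̄ > 0. -/
open Real Set

lemma tanh_hasDerivAt' (x : ℝ) : HasDerivAt Real.tanh (1 / Real.cosh x ^ 2) x := by
  have h : HasDerivAt (fun y => Real.sinh y / Real.cosh y)
      ((Real.cosh x * Real.cosh x - Real.sinh x * Real.sinh x) / Real.cosh x ^ 2) x :=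
    (Real.hasDerivAt_sinh x).div (Real.hasDerivAt_cosh x) (ne_of_gt (Real.cosh_pos x))
  have hfun : Real.tanh = fun y => Real.sinh y / Real.cosh y :=
    funext fun y => Real.tanh_eq_sinh_div_cosh y
  rw [hfun]
  convert h using 1
  rw [← Real.cosh_sq_sub_sinh_sq x]
  ring

lemma tanh_strictMono' : StrictMono Real.tanh :=
  strictMono_of_deriv_pos (fun x => by
    rw [(tanh_hasDerivAt' x).deriv]; positivity)

lemma tanh_pos' {x : ℝ} (hx : 0 < x) : 0 < Real.tanh x := by
  have := tanh_strictMono' hx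
  rwa [Real.tanh_zero] at this

lemma tanh_lt_one' (x : ℝ) : Real.tanh x < 1 := by
  rw [Real.tanh_eq_sinh_div_cosh, div_lt_one (Real.cosh_pos x)]
  exact Real.sinh_lt_cosh x

lemma tanh_mul_le' {r y : ℝ} (hr : 1 ≤ r) (hy : 0 ≤ y) :
    Real.tanh (r * y) ≤ r * Real.tanh y := by
  set g : ℝ → ℝ := fun z => r * Real.tanh z - Real.tanh (r * z) with hg
  have hder : ∀ z : ℝ, HasDerivAt g (r * (1 / Real.cosh z ^ 2) - 1 / Real.cosh (r * z) ^ 2 * r) z := by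
    intro z
    have h1 : HasDerivAt (fun w : ℝ => Real.tanh (r * w)) (1 / Real.cosh (r * z) ^ 2 * r) z :=
      HasDerivAt.comp z (tanh_hasDerivAt' (r * z)) (by simpa using (hasDerivAt_id z).const_mul r)
    exact ((tanh_hasDerivAt' z).const_mul r).sub h1
  have hmono : MonotoneOn g (Set.Ici (0 : ℝ)) := by
    apply monotoneOn_of_deriv_nonneg (convex_Ici 0)
    · exact (Differentiable.continuous (fun z => (hder z).differentiableAt)).continuousOn
    · intro x hx
      exact ((hder x).differentiableAt).differentiableWithinAt
    · intro x hx
      rw [(hder x).deriv]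
      rw [interior_Ici] at hx
      have hx' : (0:ℝ) < x := hx
      have hc : Real.cosh x ≤ Real.cosh (r * x) := by
        rw [Real.cosh_le_cosh]
        rw [abs_of_pos hx', abs_of_pos (by nlinarith)]
        nlinarith
      have h2 : 1 / Real.cosh (r * x) ^ 2 ≤ 1 / Real.cosh x ^ 2 := by
        apply one_div_le_one_div_of_le (by positivity)
        exact pow_le_pow_left₀ (le_of_lt (Real.cosh_pos x)) hc 2
      nlinarith [Real.cosh_pos x, Real.cosh_pos (r*x)]
  have h0 : g 0 = 0 := by simp [hg]
  have := hmono (Set.self_mem_Ici) (Set.mem_Ici.2 hy) hy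
  rw [h0] at this
  simp only [hg] at this
  linarith

lemma no_two_sols {a b h₁ h₂ m n m' n' : ℝ} (ha : 0 < a) (hb : 0 < b)
    (hh₁ : 0 < h₁) (hh₂ : 0 < h₂) (hm : 0 < m)
    (e1 : m = Real.tanh (a * n + h₁)) (e2 : n = Real.tanh (b * m + h₂))
    (e1' : m' = Real.tanh (a * n' + h₁)) (e2' : n' = Real.tanh (b * m' + h₂))
    (hn : 0 < n) (hlt : m < m') : False := by
  set r : ℝ := m' / m with hr
  have hr1 : 1 < r := (one_lt_div hm).2 hlt
  have hrm : r * m = m' := div_mul_cancel₀ _ (ne_of_gt hm)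
  -- n' ≤ r * n
  have hn' : n' ≤ r * n := by
    have h1 : b * m' + h₂ ≤ r * (b * m + h₂) := by nlinarith
    have h2 : Real.tanh (b * m' + h₂) ≤ Real.tanh (r * (b * m + h₂)) :=
      tanh_strictMono'.monotone h1
    have h3 : Real.tanh (r * (b * m + h₂)) ≤ r * Real.tanh (b * m + h₂) :=
      tanh_mul_le' (le_of_lt hr1) (by nlinarith)
    rw [e2', ← e2] at *
    linarith
  have h4 : a * n' + h₁ < r * (a * n + h₁) := by nlinarith
  have h5 : m' < Real.tanh (r * (a * n + h₁)) := by
    rw [e1']; exact tanh_strictMono' h4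
  have h6 : Real.tanh (r * (a * n + h₁)) ≤ r * Real.tanh (a * n + h₁) :=
    tanh_mul_le' (le_of_lt hr1) (by nlinarith)
  rw [← e1, hrm] at h6
  linarith

theorem bipartite_CW_selfconsistency_unique (α β h₁ h₂ : ℝ)
    (hα : α ∈ Set.Ioo (0 : ℝ) 1) (hβ : 0 < β) (hh₁ : 0 < h₁) (hh₂ : 0 < h₂) :
    (∃! p : ℝ × ℝ, 0 ≤ p.1 ∧ 0 ≤ p.2 ∧
        p.1 = Real.tanh (2 * β * (1 - α) * p.2 + h₁) ∧
        p.2 = Real.tanh (2 * β * α * p.1 + h₂)) ∧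
    (∀ p : ℝ × ℝ, 0 ≤ p.1 → 0 ≤ p.2 →
        p.1 = Real.tanh (2 * β * (1 - α) * p.2 + h₁) →
        p.2 = Real.tanh (2 * β * α * p.1 + h₂) → 0 < p.1 ∧ 0 < p.2) := by
  obtain ⟨hα0, hα1⟩ := hα
  set a : ℝ := 2 * β * (1 - α) with ha_def
  set b : ℝ := 2 * β * α with hb_def
  have ha : 0 < a := by rw [ha_def]; nlinarith
  have hb : 0 < b := by positivity
  -- positivity of any solution
  have hpos : ∀ p : ℝ × ℝ, 0 ≤ p.1 → 0 ≤ p.2 →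
      p.1 = Real.tanh (a * p.2 + h₁) → p.2 = Real.tanh (b * p.1 + h₂) →
      0 < p.1 ∧ 0 < p.2 := by
    intro p hp1 hp2 e1 e2
    have h2 : 0 < p.2 := by
      rw [e2]; exact tanh_pos' (by nlinarith)
    have h1 : 0 < p.1 := by
      rw [e1]; exact tanh_pos' (by nlinarith)
    exact ⟨h1, h2⟩
  -- existence via IVT
  have hex : ∃ m : ℝ, m ∈ Set.Icc (0:ℝ) 1 ∧
      Real.tanh (a * Real.tanh (b * m + h₂) + h₁) - m = 0 := by
    set g : ℝ → ℝ := fun m => Real.tanh (a * Real.tanh (b * m + h₂) + h₁) - m with hg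
    have hcont : ContinuousOn g (Set.Icc (0:ℝ) 1) := by
      apply Continuous.continuousOn
      have : Continuous Real.tanh := Differentiable.continuous (fun z => (tanh_hasDerivAt' z).differentiableAt)
      fun_prop
    have hg1 : g 1 < 0 := by
      have := tanh_lt_one' (a * Real.tanh (b * 1 + h₂) + h₁)
      simp only [hg]; linarith
    have hg0 : 0 < g 0 := by
      have ht : 0 < Real.tanh (b * 0 + h₂) := tanh_pos' (by nlinarith)
      have := tanh_pos' (x := a * Real.tanh (b * 0 + h₂) + h₁) (by nlinarith)
      simp only [hg]; linarith
    have hsub := intermediate_value_Icc' (by norm_num : (0:ℝ) ≤ 1) hcont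
    have h0mem : (0:ℝ) ∈ Set.Icc (g 1) (g 0) := ⟨le_of_lt hg1, le_of_lt hg0⟩
    obtain ⟨m, hm, hm0⟩ := hsub h0mem
    exact ⟨m, hm, hm0⟩
  obtain ⟨m, hm01, hmeq⟩ := hex
  set n : ℝ := Real.tanh (b * m + h₂) with hn_def
  have hn0 : 0 < n := tanh_pos' (by nlinarith [hm01.1])
  have e1 : m = Real.tanh (a * n + h₁) := by rw [hn_def]; linarith [hmeq]
  constructor
  · refine ⟨(m, n), ⟨hm01.1, le_of_lt hn0, e1, rfl⟩, ?_⟩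
    rintro ⟨m', n'⟩ ⟨hm'0, hn'0, e1', e2'⟩
    simp only at hm'0 hn'0 e1' e2' ⊢
    obtain ⟨hm'pos, hn'pos⟩ := hpos (m', n') hm'0 hn'0 e1' e2'
    obtain ⟨hmpos, hnpos⟩ := hpos (m, n) hm01.1 (le_of_lt hn0) e1 rfl
    have hmm : m' = m := by
      rcases lt_trichotomy m' m with h | h | h
      · exact absurd (no_two_sols ha hb hh₁ hh₂ hm'pos e1' e2' e1 rfl hn'pos h) (fun x => x)
      · exact h
      · exact absurd (no_two_sols ha hb hh₁ hh₂ hmpos e1 rfl e1' e2' hnpos h) (fun x => x)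
    have hnn : n' = n := by rw [e2', hmm, ← hn_def]
    simp [hmm, hnn]
  · intro p hp1 hp2 e1 e2
    exact hpos p hp1 hp2 e1 e2
end

section
/- For the bipartite Curie-Weiss model with zero external fields, in the thermodynamic limit with N₁/N → α, the pressure satisfies A(α,β) ≤ α A^{CW}(β̄) + (1-α) A^{CW}(β̄) = A^{CW}(β̄), where β̄ = 2β√(α(1-α)) and A^{CW}(β̄) is the Curie-Weiss pressure at inverse temperature β̄. At finite volume: A_{N₁,N₂}(β) ≤ α_N A^{CW}_{N₁}(β') + (1-α_N) A^{CW}_{N₂}(β'') with β' = 2β(1-α_N)a², β'' = 2βα_N/a² and a² = √((1-α_N)/α_N). -/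
noncomputable def spin (b : Bool) : ℝ := if b then 1 else -1

noncomputable def mag {K : ℕ} (σ : Fin K → Bool) : ℝ := (∑ i, spin (σ i)) / K

/-- One-party Curie-Weiss pressure on `K` spins at inverse temperature `b`. -/
noncomputable def Acw (K : ℕ) (b : ℝ) : ℝ :=
  (1 / (K : ℝ)) * Real.log (∑ σ : Fin K → Bool, Real.exp (b * K * (mag σ) ^ 2 / 2))

/-- Bipartite Curie-Weiss pressure (zero external fields). -/
noncomputable def Abip (N₁ N₂ : ℕ) (β : ℝ) : ℝ :=
  (1 / ((N₁ : ℝ) + N₂)) * Real.log (∑ σ : Fin N₁ → Bool, ∑ τ : Fin N₂ → Bool,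
    Real.exp (2 * β * ((N₁ : ℝ) + N₂) * ((N₁ : ℝ) / ((N₁ : ℝ) + N₂)) *
      (1 - (N₁ : ℝ) / ((N₁ : ℝ) + N₂)) * mag σ * mag τ))

lemma mag_sq_le_one {K : ℕ} (σ : Fin K → Bool) : (mag σ) ^ 2 ≤ 1 := by
  rcases Nat.eq_zero_or_pos K with h | h
  · subst h; simp [mag]
  · have hK : (0:ℝ) < K := by exact_mod_cast h
    have habs : |mag σ| ≤ 1 := by
      unfold mag
      rw [abs_div, abs_of_pos hK, div_le_one hK]
      calc |∑ i, spin (σ i)| ≤ ∑ i, |spin (σ i)| := Finset.abs_sum_le_sum_abs _ _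
        _ = K := by
          have : ∀ b : Bool, |spin b| = 1 := by intro b; cases b <;> simp [spin]
          simp [this]
    calc (mag σ)^2 = |mag σ|^2 := (sq_abs _).symm
      _ ≤ 1 := by nlinarith [abs_nonneg (mag σ)]

lemma sum_exp_pos (K : ℕ) (f : (Fin K → Bool) → ℝ) :
    0 < ∑ σ : Fin K → Bool, Real.exp (f σ) :=
  Finset.sum_pos (fun _ _ => Real.exp_pos _) Finset.univ_nonempty

lemma acw_lip (K : ℕ) (hK : 1 ≤ K) (b b' : ℝ) : Acw K b ≤ Acw K b' + |b - b'| / 2 := by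
  have hK' : (0:ℝ) < K := by exact_mod_cast hK
  unfold Acw
  have hpt : ∀ σ : Fin K → Bool,
      Real.exp (b * K * (mag σ)^2 / 2) ≤ Real.exp (|b - b'| * K / 2) * Real.exp (b' * K * (mag σ)^2 / 2) := by
    intro σ
    rw [← Real.exp_add, Real.exp_le_exp]
    have h1 : (b - b') * (mag σ)^2 ≤ |b - b'| := by
      calc (b - b') * (mag σ)^2 ≤ |b - b'| * (mag σ)^2 :=
            mul_le_mul_of_nonneg_right (le_abs_self _) (sq_nonneg _)
        _ ≤ |b - b'| * 1 := mul_le_mul_of_nonneg_left (mag_sq_le_one σ) (abs_nonneg _)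
        _ = |b - b'| := mul_one _
    nlinarith [hK'.le]
  have hlog : Real.log (∑ σ : Fin K → Bool, Real.exp (b * K * (mag σ)^2 / 2))
      ≤ |b - b'| * K / 2 + Real.log (∑ σ : Fin K → Bool, Real.exp (b' * K * (mag σ)^2 / 2)) := by
    have hle : (∑ σ : Fin K → Bool, Real.exp (b * K * (mag σ)^2 / 2))
        ≤ Real.exp (|b - b'| * K / 2) * ∑ σ : Fin K → Bool, Real.exp (b' * K * (mag σ)^2 / 2) := by
      rw [Finset.mul_sum]
      exact Finset.sum_le_sum fun σ _ => hpt σ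
    calc Real.log (∑ σ : Fin K → Bool, Real.exp (b * K * (mag σ)^2 / 2))
        ≤ Real.log (Real.exp (|b - b'| * K / 2) * ∑ σ : Fin K → Bool, Real.exp (b' * K * (mag σ)^2 / 2)) :=
          Real.log_le_log (sum_exp_pos K _) hle
      _ = |b - b'| * K / 2 + Real.log (∑ σ : Fin K → Bool, Real.exp (b' * K * (mag σ)^2 / 2)) := by
          rw [Real.log_mul (Real.exp_ne_zero _) (ne_of_gt (sum_exp_pos K _)), Real.log_exp]
  have := mul_le_mul_of_nonneg_left hlog (by positivity : (0:ℝ) ≤ 1 / K)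
  calc (1 / (K:ℝ)) * Real.log (∑ σ : Fin K → Bool, Real.exp (b * K * (mag σ)^2 / 2))
      ≤ (1 / (K:ℝ)) * (|b - b'| * K / 2 + Real.log (∑ σ : Fin K → Bool, Real.exp (b' * K * (mag σ)^2 / 2))) := this
    _ = (1 / (K:ℝ)) * Real.log (∑ σ : Fin K → Bool, Real.exp (b' * K * (mag σ)^2 / 2)) + |b - b'| / 2 := by
        field_simp; ring

lemma master (β : ℝ) (hβ : 0 < β) (N₁ N₂ : ℕ) (h₁ : 1 ≤ N₁) (h₂ : 1 ≤ N₂)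
    (s : ℝ) (hs : 0 < s) :
    Abip N₁ N₂ β ≤
      ((N₁ : ℝ) / ((N₁ : ℝ) + N₂)) * Acw N₁ (2 * β * (1 - (N₁ : ℝ) / ((N₁ : ℝ) + N₂)) * s)
        + (1 - (N₁ : ℝ) / ((N₁ : ℝ) + N₂)) * Acw N₂ (2 * β * ((N₁ : ℝ) / ((N₁ : ℝ) + N₂)) / s) := by
  have hn1 : (0:ℝ) < N₁ := by exact_mod_cast h₁
  have hn2 : (0:ℝ) < N₂ := by exact_mod_cast h₂
  have hN : (0:ℝ) < (N₁:ℝ) + N₂ := by linarith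
  set n1 : ℝ := (N₁:ℝ) with hn1d
  set n2 : ℝ := (N₂:ℝ) with hn2d
  set A : ℝ := n1 / (n1 + n2) with hA
  have hA1 : 1 - A = n2 / (n1 + n2) := by rw [hA]; field_simp; ring
  have hApos : 0 < A := div_pos hn1 hN
  have h1A : 0 < 1 - A := by rw [hA1]; positivity
  set b₁ : ℝ := 2 * β * (1 - A) * s with hb₁
  set b₂ : ℝ := 2 * β * A / s with hb₂
  have key : ∀ x y : ℝ, 2 * β * (n1 + n2) * A * (1 - A) * x * y
      ≤ b₁ * n1 * x ^ 2 / 2 + b₂ * n2 * y ^ 2 / 2 := by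
    intro x y
    have hc : (0:ℝ) < β * n1 * (1 - A) := by positivity
    have e1 : 2 * β * (n1 + n2) * A * (1 - A) * x * y = 2 * (β * n1 * (1 - A)) * x * y := by
      rw [hA]; field_simp
    have e2 : b₁ * n1 * x ^ 2 / 2 + b₂ * n2 * y ^ 2 / 2
        = (β * n1 * (1 - A)) * s * x ^ 2 + (β * n1 * (1 - A)) / s * y ^ 2 := by
      rw [hb₁, hb₂, hA1, hA]; field_simp
    have h0 : 0 ≤ (β * n1 * (1 - A)) / s * (s * x - y) ^ 2 := by positivity
    have expand : (β * n1 * (1 - A)) * s * x ^ 2 + (β * n1 * (1 - A)) / s * y ^ 2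
        - 2 * (β * n1 * (1 - A)) * x * y = (β * n1 * (1 - A)) / s * (s * x - y) ^ 2 := by
      field_simp; ring
    rw [e1, e2]; linarith [expand, h0]
  have hsum : (∑ σ : Fin N₁ → Bool, ∑ τ : Fin N₂ → Bool,
        Real.exp (2 * β * (n1 + n2) * A * (1 - A) * mag σ * mag τ))
      ≤ (∑ σ : Fin N₁ → Bool, Real.exp (b₁ * n1 * (mag σ) ^ 2 / 2))
        * (∑ τ : Fin N₂ → Bool, Real.exp (b₂ * n2 * (mag τ) ^ 2 / 2)) := by
    rw [Finset.sum_mul_sum]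
    refine Finset.sum_le_sum fun σ _ => Finset.sum_le_sum fun τ _ => ?_
    rw [← Real.exp_add]
    exact Real.exp_le_exp.mpr (key (mag σ) (mag τ))
  have hlog : Real.log (∑ σ : Fin N₁ → Bool, ∑ τ : Fin N₂ → Bool,
        Real.exp (2 * β * (n1 + n2) * A * (1 - A) * mag σ * mag τ))
      ≤ Real.log (∑ σ : Fin N₁ → Bool, Real.exp (b₁ * n1 * (mag σ) ^ 2 / 2))
        + Real.log (∑ τ : Fin N₂ → Bool, Real.exp (b₂ * n2 * (mag τ) ^ 2 / 2)) := by
    have hpos : 0 < ∑ σ : Fin N₁ → Bool, ∑ τ : Fin N₂ → Bool,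
        Real.exp (2 * β * (n1 + n2) * A * (1 - A) * mag σ * mag τ) :=
      Finset.sum_pos (fun σ _ => sum_exp_pos N₂ _) Finset.univ_nonempty
    calc _ ≤ Real.log ((∑ σ : Fin N₁ → Bool, Real.exp (b₁ * n1 * (mag σ) ^ 2 / 2))
          * (∑ τ : Fin N₂ → Bool, Real.exp (b₂ * n2 * (mag τ) ^ 2 / 2))) :=
        Real.log_le_log hpos hsum
      _ = _ := Real.log_mul (ne_of_gt (sum_exp_pos N₁ _)) (ne_of_gt (sum_exp_pos N₂ _))
  unfold Abip Acw
  have hfin := mul_le_mul_of_nonneg_left hlog (by positivity : (0:ℝ) ≤ 1 / (n1 + n2))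
  calc (1 / (n1 + n2)) * Real.log (∑ σ : Fin N₁ → Bool, ∑ τ : Fin N₂ → Bool,
        Real.exp (2 * β * (n1 + n2) * A * (1 - A) * mag σ * mag τ))
      ≤ (1 / (n1 + n2)) * (Real.log (∑ σ : Fin N₁ → Bool, Real.exp (b₁ * n1 * (mag σ) ^ 2 / 2))
        + Real.log (∑ τ : Fin N₂ → Bool, Real.exp (b₂ * n2 * (mag τ) ^ 2 / 2))) := hfin
    _ = A * ((1 / n1) * Real.log (∑ σ : Fin N₁ → Bool, Real.exp (b₁ * n1 * (mag σ) ^ 2 / 2)))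
        + (1 - A) * ((1 / n2) * Real.log (∑ τ : Fin N₂ → Bool, Real.exp (b₂ * n2 * (mag τ) ^ 2 / 2))) := by
        rw [hA1, hA]; field_simp

theorem bipartite_CW_pressure_upper_bound (β : ℝ) (hβ : 0 < β) :
    (∀ N₁ N₂ : ℕ, 1 ≤ N₁ → 1 ≤ N₂ →
      Abip N₁ N₂ β ≤
        ((N₁ : ℝ) / ((N₁ : ℝ) + N₂)) *
            Acw N₁ (2 * β * (1 - (N₁ : ℝ) / ((N₁ : ℝ) + N₂)) *
              Real.sqrt ((1 - (N₁ : ℝ) / ((N₁ : ℝ) + N₂)) / ((N₁ : ℝ) / ((N₁ : ℝ) + N₂))))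
          + (1 - (N₁ : ℝ) / ((N₁ : ℝ) + N₂)) *
            Acw N₂ (2 * β * ((N₁ : ℝ) / ((N₁ : ℝ) + N₂)) /
              Real.sqrt ((1 - (N₁ : ℝ) / ((N₁ : ℝ) + N₂)) / ((N₁ : ℝ) / ((N₁ : ℝ) + N₂))))) ∧
    (∀ (α A ACW : ℝ), α ∈ Set.Ioo (0 : ℝ) 1 →
      ∀ n₁ n₂ : ℕ → ℕ,
        Filter.Tendsto n₁ Filter.atTop Filter.atTop →
        Filter.Tendsto n₂ Filter.atTop Filter.atTop →
        Filter.Tendsto (fun k => (n₁ k : ℝ) / ((n₁ k : ℝ) + n₂ k)) Filter.atTop (nhds α) →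
        Filter.Tendsto (fun k => Abip (n₁ k) (n₂ k) β) Filter.atTop (nhds A) →
        Filter.Tendsto (fun k => Acw k (2 * β * Real.sqrt (α * (1 - α)))) Filter.atTop (nhds ACW) →
        A ≤ α * ACW + (1 - α) * ACW) := by
  constructor
  · intro N₁ N₂ h₁ h₂
    have hn1 : (0:ℝ) < N₁ := by exact_mod_cast h₁
    have hn2 : (0:ℝ) < N₂ := by exact_mod_cast h₂
    have hN : (0:ℝ) < (N₁:ℝ) + N₂ := by linarith
    have hApos : 0 < (N₁:ℝ) / ((N₁:ℝ) + N₂) := div_pos hn1 hN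
    have h1A : 0 < 1 - (N₁:ℝ) / ((N₁:ℝ) + N₂) := by
      rw [sub_pos, div_lt_one hN]; linarith
    exact master β hβ N₁ N₂ h₁ h₂ _ (Real.sqrt_pos.mpr (div_pos h1A hApos))
  · intro α A ACW hα n₁ n₂ hn1 hn2 hta hAb hAC
    obtain ⟨hα0, hα1⟩ := hα
    have h1α : 0 < 1 - α := by linarith
    set β' : ℝ := 2 * β * Real.sqrt (α * (1 - α)) with hβ'
    set s : ℝ := Real.sqrt (α / (1 - α)) with hsd
    have hs : 0 < s := Real.sqrt_pos.mpr (by positivity)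
    have e1 : 2 * β * (1 - α) * s = β' := by
      rw [hβ', hsd]
      have : (1 - α) * Real.sqrt (α / (1 - α)) = Real.sqrt (α * (1 - α)) := by
        rw [show (1 - α) = Real.sqrt ((1 - α) ^ 2) from (Real.sqrt_sq h1α.le).symm,
          ← Real.sqrt_mul (by positivity)]
        congr 1
        rw [Real.sqrt_sq h1α.le]
        field_simp
      rw [mul_assoc, this]
    have e2 : 2 * β * α / s = β' := by
      rw [hβ', hsd]
      have : α / Real.sqrt (α / (1 - α)) = Real.sqrt (α * (1 - α)) := by
        rw [div_eq_mul_inv, ← Real.sqrt_inv, inv_div,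
          show α = Real.sqrt (α ^ 2) from (Real.sqrt_sq hα0.le).symm,
          ← Real.sqrt_mul (by positivity)]
        congr 1
        rw [Real.sqrt_sq hα0.le]
        field_simp
      rw [mul_div_assoc, this]
    set αk : ℕ → ℝ := fun k => (n₁ k : ℝ) / ((n₁ k : ℝ) + n₂ k) with hαk
    set g : ℕ → ℝ := fun k =>
      αk k * (Acw (n₁ k) β' + |2 * β * (1 - αk k) * s - β'| / 2)
        + (1 - αk k) * (Acw (n₂ k) β' + |2 * β * αk k / s - β'| / 2) with hg
    have hev : ∀ᶠ k in Filter.atTop, Abip (n₁ k) (n₂ k) β ≤ g k := by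
      filter_upwards [hn1.eventually_ge_atTop 1, hn2.eventually_ge_atTop 1] with k h1 h2
      have hn1' : (0:ℝ) < n₁ k := by exact_mod_cast h1
      have hn2' : (0:ℝ) < n₂ k := by exact_mod_cast h2
      have hNk : (0:ℝ) < (n₁ k : ℝ) + n₂ k := by linarith
      have hαknn : 0 ≤ αk k := le_of_lt (div_pos hn1' hNk)
      have h1αknn : 0 ≤ 1 - αk k := by
        rw [sub_nonneg, hαk]; exact (div_le_one hNk).mpr (by linarith)
      have h1 := master β hβ (n₁ k) (n₂ k) h1 h2 s hs
      have h2' := acw_lip (n₁ k) (by exact_mod_cast hn1') (2 * β * (1 - αk k) * s) β'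
      have h3' := acw_lip (n₂ k) (by exact_mod_cast hn2') (2 * β * αk k / s) β'
      calc Abip (n₁ k) (n₂ k) β
          ≤ αk k * Acw (n₁ k) (2 * β * (1 - αk k) * s)
            + (1 - αk k) * Acw (n₂ k) (2 * β * αk k / s) := h1
        _ ≤ g k := by
            rw [hg]
            exact add_le_add (mul_le_mul_of_nonneg_left h2' hαknn)
              (mul_le_mul_of_nonneg_left h3' h1αknn)
    have hAcw1 : Filter.Tendsto (fun k => Acw (n₁ k) β') Filter.atTop (nhds ACW) := hAC.comp hn1
    have hAcw2 : Filter.Tendsto (fun k => Acw (n₂ k) β') Filter.atTop (nhds ACW) := hAC.comp hn2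
    have habs1 : Filter.Tendsto (fun k => |2 * β * (1 - αk k) * s - β'|) Filter.atTop (nhds 0) := by
      have : Filter.Tendsto (fun k => 2 * β * (1 - αk k) * s - β') Filter.atTop
          (nhds (2 * β * (1 - α) * s - β')) :=
        (((hta.const_sub 1).const_mul (2 * β)).mul_const s).sub_const β'
      have h0 := this.abs
      rwa [e1, sub_self, abs_zero] at h0
    have habs2 : Filter.Tendsto (fun k => |2 * β * αk k / s - β'|) Filter.atTop (nhds 0) := by
      have : Filter.Tendsto (fun k => 2 * β * αk k / s - β') Filter.atTop
          (nhds (2 * β * α / s - β')) := ((hta.const_mul (2 * β)).div_const s).sub_const β'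
      have h0 := this.abs
      rwa [e2, sub_self, abs_zero] at h0
    have hgt : Filter.Tendsto g Filter.atTop
        (nhds (α * (ACW + 0 / 2) + (1 - α) * (ACW + 0 / 2))) :=
      (hta.mul (hAcw1.add (habs1.div_const 2))).add
        ((hta.const_sub 1).mul (hAcw2.add (habs2.div_const 2)))
    have : α * (ACW + 0 / 2) + (1 - α) * (ACW + 0 / 2) = α * ACW + (1 - α) * ACW := by ring
    rw [this] at hgt
    exact le_of_tendsto_of_tendsto hAb hgt hev
end

section
/- Under the change of variables σᵢ ↦ σᵢσ'ᵢ, τⱼ ↦ τⱼτ'ⱼ (a bijection of {-1,1}^{N₁}×{-1,1}^{N₂} for each fixed (σ',τ')), the ratio E[Z²]/E[Z]² for the bipartite spin glass equals 2^{-N} Σ_{σ,τ} exp(2β²N α_N(1-α_N) m(σ)n(τ)), i.e. the normalized partition function of a bipartite Curie-Weiss model at inverse temperature β² (up to the 2^{-N} normalization). -/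
open MeasureTheory ProbabilityTheory

open scoped ENNReal NNReal

lemma spin_sq (b : Bool) : spin b ^ 2 = 1 := by cases b <;> norm_num [spin]

lemma spin_beq (x y : Bool) : spin (x == y) * spin y = spin x := by
  cases x <;> cases y <;> norm_num [spin]

lemma beq_invol (y : Bool) : Function.Involutive (fun x => x == y) := by
  intro x; cases x <;> cases y <;> rfl

lemma gaussPDF_mul_exp (c x : ℝ) :
    gaussianPDFReal 0 1 x * Real.exp (c * x)
      = Real.exp (c ^ 2 / 2) * gaussianPDFReal c 1 x := by
  simp only [gaussianPDFReal, NNReal.coe_one, mul_one, sub_zero]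
  rw [mul_assoc, ← Real.exp_add, mul_comm (Real.exp (c^2/2)), mul_assoc, ← Real.exp_add]
  congr 1
  ring_nf

lemma smul_eq_pdf_mul (c : ℝ) :
    (fun x => (gaussianPDFReal 0 1 x).toNNReal • Real.exp (c * x))
      = fun x => Real.exp (c ^ 2 / 2) * gaussianPDFReal c 1 x := by
  funext x
  rw [NNReal.smul_def, Real.coe_toNNReal _ (gaussianPDFReal_nonneg 0 1 x), smul_eq_mul,
    gaussPDF_mul_exp]

lemma integrable_exp_gauss (c : ℝ) :
    Integrable (fun x => Real.exp (c * x)) (gaussianReal 0 1) := by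
  rw [gaussianReal_of_var_ne_zero 0 one_ne_zero, gaussianPDF_def]
  have hmeas : Measurable (fun x => (gaussianPDFReal 0 1 x).toNNReal) :=
    (measurable_gaussianPDFReal 0 1).real_toNNReal
  rw [show (fun x => ENNReal.ofReal (gaussianPDFReal 0 1 x))
      = (fun x => ((gaussianPDFReal 0 1 x).toNNReal : ℝ≥0∞)) from rfl,
    integrable_withDensity_iff_integrable_smul hmeas, smul_eq_pdf_mul]
  exact (integrable_gaussianPDFReal c 1).const_mul _

lemma integral_exp_gauss (c : ℝ) :
    ∫ x, Real.exp (c * x) ∂(gaussianReal 0 1) = Real.exp (c ^ 2 / 2) := by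
  rw [gaussianReal_of_var_ne_zero 0 one_ne_zero, gaussianPDF_def]
  have hmeas : Measurable (fun x => (gaussianPDFReal 0 1 x).toNNReal) :=
    (measurable_gaussianPDFReal 0 1).real_toNNReal
  rw [show (fun x => ENNReal.ofReal (gaussianPDFReal 0 1 x))
      = (fun x => ((gaussianPDFReal 0 1 x).toNNReal : ℝ≥0∞)) from rfl,
    integral_withDensity_eq_integral_smul hmeas]
  simp_rw [show ∀ x : ℝ, (gaussianPDFReal 0 1 x).toNNReal • Real.exp (c * x)
      = Real.exp (c ^ 2 / 2) * gaussianPDFReal c 1 x from fun x => congrFun (smul_eq_pdf_mul c) x]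
  rw [integral_const_mul, integral_gaussianPDFReal_eq_one c one_ne_zero, mul_one]

lemma pi_gauss_integral {ι : Type*} [Fintype ι] (f : ι → ℝ → ℝ) :
    ∫ x, ∏ i, f i (x i) ∂(Measure.pi fun _ : ι => gaussianReal 0 1)
      = ∏ i, ∫ x, f i x ∂(gaussianReal 0 1) := by
  letI : MeasureSpace ℝ := ⟨gaussianReal 0 1⟩
  haveI : SigmaFinite (volume : Measure ℝ) :=
    inferInstanceAs (SigmaFinite (gaussianReal 0 1))
  rw [show (Measure.pi fun _ : ι => gaussianReal 0 1) = (volume : Measure (ι → ℝ)) from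
    (MeasureTheory.volume_pi).symm]
  exact MeasureTheory.integral_fintype_prod_eq_prod f

lemma pi_gauss_integrable {ι : Type*} [Fintype ι] (f : ι → ℝ → ℝ)
    (hf : ∀ i, Integrable (f i) (gaussianReal 0 1)) :
    Integrable (fun x => ∏ i, f i (x i)) (Measure.pi fun _ : ι => gaussianReal 0 1) := by
  letI : MeasureSpace ℝ := ⟨gaussianReal 0 1⟩
  haveI : SigmaFinite (volume : Measure ℝ) :=
    inferInstanceAs (SigmaFinite (gaussianReal 0 1))
  rw [show (Measure.pi fun _ : ι => gaussianReal 0 1) = (volume : Measure (ι → ℝ)) from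
    (MeasureTheory.volume_pi).symm]
  exact MeasureTheory.Integrable.fintype_prod hf

lemma gauss_exp_sum_integrable {ι : Type*} [Fintype ι] (g : ι → ℝ) :
    Integrable (fun ξ : ι → ℝ => Real.exp (∑ i, g i * ξ i))
      (Measure.pi fun _ : ι => gaussianReal 0 1) := by
  simp_rw [Real.exp_sum]
  exact pi_gauss_integrable _ fun i => integrable_exp_gauss (g i)

lemma gauss_exp_sum_integral {ι : Type*} [Fintype ι] (g : ι → ℝ) :
    ∫ ξ, Real.exp (∑ i, g i * ξ i) ∂(Measure.pi fun _ : ι => gaussianReal 0 1)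
      = Real.exp (∑ i, g i ^ 2 / 2) := by
  simp_rw [Real.exp_sum]
  rw [pi_gauss_integral (fun i x => Real.exp (g i * x))]
  simp_rw [integral_exp_gauss]

theorem bipartite_SG_moment_ratio (N₁ N₂ : ℕ) (hN₁ : 1 ≤ N₁) (hN₂ : 1 ≤ N₂) (β : ℝ) :
    let N : ℝ := (N₁ : ℝ) + N₂
    let αN : ℝ := (N₁ : ℝ) / N
    let Z : ((Fin N₁ × Fin N₂ → ℝ)) → ℝ := fun ξ =>
      ∑ σ : Fin N₁ → Bool, ∑ τ : Fin N₂ → Bool,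
        Real.exp (β * Real.sqrt (2 / N) *
          ∑ i : Fin N₁, ∑ j : Fin N₂, ξ (i, j) * spin (σ i) * spin (τ j))
    (∫ ξ, (Z ξ) ^ 2 ∂(Measure.pi fun _ : Fin N₁ × Fin N₂ => gaussianReal 0 1))
        / (∫ ξ, Z ξ ∂(Measure.pi fun _ : Fin N₁ × Fin N₂ => gaussianReal 0 1)) ^ 2
      = (∑ σ : Fin N₁ → Bool, ∑ τ : Fin N₂ → Bool,
          Real.exp (2 * β ^ 2 * N * αN * (1 - αN) * mag σ * mag τ)) / 2 ^ (N₁ + N₂) := by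
  intro N αN Z
  have hN1 : (0:ℝ) < (N₁:ℝ) := by exact_mod_cast Nat.lt_of_lt_of_le Nat.zero_lt_one hN₁
  have hN2 : (0:ℝ) < (N₂:ℝ) := by exact_mod_cast Nat.lt_of_lt_of_le Nat.zero_lt_one hN₂
  have hNdef : N = (N₁:ℝ) + N₂ := rfl
  have hα : αN = (N₁:ℝ) / N := rfl
  have hN : (0:ℝ) < N := add_pos hN1 hN2
  set c : ℝ := β * Real.sqrt (2 / N) with hc
  have hc2 : c ^ 2 = 2 * β ^ 2 / N := by
    rw [hc, mul_pow, Real.sq_sqrt (div_nonneg (by norm_num) hN.le)]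
    ring
  -- Step 1 : rewrite Z
  have hZ : Z = fun ξ => ∑ a : (Fin N₁ → Bool) × (Fin N₂ → Bool),
      Real.exp (∑ p : Fin N₁ × Fin N₂, c * (spin (a.1 p.1) * spin (a.2 p.2)) * ξ p) := by
    funext ξ
    show ∑ σ : Fin N₁ → Bool, ∑ τ : Fin N₂ → Bool,
        Real.exp (c * ∑ i : Fin N₁, ∑ j : Fin N₂, ξ (i, j) * spin (σ i) * spin (τ j)) = _
    conv_rhs => rw [Fintype.sum_prod_type]
    refine Finset.sum_congr rfl fun σ _ => Finset.sum_congr rfl fun τ _ => ?_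
    congr 1
    rw [Fintype.sum_prod_type, Finset.mul_sum]
    refine Finset.sum_congr rfl fun i _ => ?_
    rw [Finset.mul_sum]
    exact Finset.sum_congr rfl fun j _ => by ring
  obtain ⟨c', hc2', hZ'⟩ : ∃ d : ℝ, d ^ 2 = 2 * β ^ 2 / N ∧
      Z = fun ξ => ∑ a : (Fin N₁ → Bool) × (Fin N₂ → Bool),
        Real.exp (∑ p : Fin N₁ × Fin N₂, d * (spin (a.1 p.1) * spin (a.2 p.2)) * ξ p) :=
    ⟨c, hc2, hZ⟩
  clear hZ hc2 hc
  clear_value c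
  clear c
  rename' c' => c, hc2' => hc2, hZ' => hZ
  -- Step 2 : rewrite Z^2
  have hZ2 : (fun ξ => Z ξ ^ 2) = fun ξ =>
      ∑ ab : ((Fin N₁ → Bool) × (Fin N₂ → Bool)) × ((Fin N₁ → Bool) × (Fin N₂ → Bool)),
        Real.exp (∑ p : Fin N₁ × Fin N₂,
          (c * (spin (ab.1.1 p.1) * spin (ab.1.2 p.2))
            + c * (spin (ab.2.1 p.1) * spin (ab.2.2 p.2))) * ξ p) := by
    funext ξ
    rw [hZ, sq, Finset.sum_mul_sum]
    conv_rhs => rw [Fintype.sum_prod_type]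
    dsimp only
    refine Finset.sum_congr rfl fun a _ => Finset.sum_congr rfl fun b _ => ?_
    rw [← Real.exp_add, ← Finset.sum_add_distrib]
    congr 1
    exact Finset.sum_congr rfl fun p _ => by ring
  -- Step 3 : the first moment
  have hI1 : (∫ ξ, Z ξ ∂(Measure.pi fun _ : Fin N₁ × Fin N₂ => gaussianReal 0 1))
      = (2:ℝ) ^ (N₁ + N₂) * Real.exp ((N₁ * N₂ : ℝ) * c ^ 2 / 2) := by
    simp only [hZ]
    rw [integral_finset_sum _ fun a _ => gauss_exp_sum_integrable _]
    simp_rw [gauss_exp_sum_integral]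
    have hterm : ∀ a : (Fin N₁ → Bool) × (Fin N₂ → Bool),
        (∑ p : Fin N₁ × Fin N₂, (c * (spin (a.1 p.1) * spin (a.2 p.2))) ^ 2 / 2)
          = (N₁ * N₂ : ℝ) * c ^ 2 / 2 := by
      intro a
      have key : ∀ x y : Bool, (c * (spin x * spin y)) ^ 2 = c ^ 2 := by
        intro x y
        have h1 := spin_sq x; have h2 := spin_sq y
        calc (c * (spin x * spin y)) ^ 2 = c ^ 2 * (spin x ^ 2 * spin y ^ 2) := by ring
          _ = c ^ 2 := by rw [h1, h2]; ring
      rw [Finset.sum_congr rfl fun p _ => by rw [key (a.1 p.1) (a.2 p.2)]]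
      rw [Finset.sum_const, Finset.card_univ, Fintype.card_prod, Fintype.card_fin,
        Fintype.card_fin, nsmul_eq_mul]
      push_cast
      ring
    simp_rw [hterm]
    rw [Finset.sum_const, Finset.card_univ, Fintype.card_prod, Fintype.card_fun, Fintype.card_fun,
      Fintype.card_fin, Fintype.card_fin, Fintype.card_bool, nsmul_eq_mul]
    push_cast
    rw [pow_add]
  -- Step 4 : the second moment
  have hI2 : (∫ ξ, Z ξ ^ 2 ∂(Measure.pi fun _ : Fin N₁ × Fin N₂ => gaussianReal 0 1))
      = Real.exp ((N₁ * N₂ : ℝ) * c ^ 2) * ((2:ℝ) ^ (N₁ + N₂) *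
          ∑ a : (Fin N₁ → Bool) × (Fin N₂ → Bool),
            Real.exp (c ^ 2 * (∑ i, spin (a.1 i)) * (∑ j, spin (a.2 j)))) := by
    rw [hZ2, integral_finset_sum _ fun ab _ => gauss_exp_sum_integrable _]
    simp_rw [gauss_exp_sum_integral]
    have hab : ∀ ab : ((Fin N₁ → Bool) × (Fin N₂ → Bool)) × ((Fin N₁ → Bool) × (Fin N₂ → Bool)),
        Real.exp (∑ p : Fin N₁ × Fin N₂,
          (c * (spin (ab.1.1 p.1) * spin (ab.1.2 p.2))
            + c * (spin (ab.2.1 p.1) * spin (ab.2.2 p.2))) ^ 2 / 2)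
        = Real.exp ((N₁ * N₂ : ℝ) * c ^ 2)
          * Real.exp (c ^ 2 * (∑ i, spin (ab.1.1 i) * spin (ab.2.1 i))
              * (∑ j, spin (ab.1.2 j) * spin (ab.2.2 j))) := by
      intro ab
      rw [← Real.exp_add]
      congr 1
      have hp : ∀ p : Fin N₁ × Fin N₂,
          (c * (spin (ab.1.1 p.1) * spin (ab.1.2 p.2))
            + c * (spin (ab.2.1 p.1) * spin (ab.2.2 p.2))) ^ 2 / 2
          = c ^ 2 + c ^ 2 * ((spin (ab.1.1 p.1) * spin (ab.2.1 p.1))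
              * (spin (ab.1.2 p.2) * spin (ab.2.2 p.2))) := by
        intro p
        have h1 := spin_sq (ab.1.1 p.1); have h2 := spin_sq (ab.1.2 p.2)
        have h3 := spin_sq (ab.2.1 p.1); have h4 := spin_sq (ab.2.2 p.2)
        have expand : ∀ x y z w : ℝ, (c*(x*y) + c*(z*w))^2/2
            = c^2*(x^2*y^2)/2 + c^2*(z^2*w^2)/2 + c^2*((x*z)*(y*w)) := by intros; ring
        rw [expand, h1, h2, h3, h4]
        ring
      rw [Finset.sum_congr rfl fun p _ => hp p, Finset.sum_add_distrib, Finset.sum_const,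
        Finset.card_univ, ← Finset.mul_sum, Fintype.card_prod, Fintype.card_fin, Fintype.card_fin,
        nsmul_eq_mul]
      push_cast
      congr 1
      rw [mul_assoc]
      congr 1
      rw [Finset.sum_mul_sum, Fintype.sum_prod_type]
    rw [Finset.sum_congr rfl fun ab _ => hab ab, ← Finset.mul_sum]
    congr 1
    rw [Fintype.sum_prod_type_right]
    have hgauge : ∀ b : (Fin N₁ → Bool) × (Fin N₂ → Bool),
        (∑ a : (Fin N₁ → Bool) × (Fin N₂ → Bool),
            Real.exp (c ^ 2 * (∑ i, spin (a.1 i) * spin (b.1 i))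
              * (∑ j, spin (a.2 j) * spin (b.2 j))))
        = ∑ a : (Fin N₁ → Bool) × (Fin N₂ → Bool),
            Real.exp (c ^ 2 * (∑ i, spin (a.1 i)) * (∑ j, spin (a.2 j))) := by
      intro b
      set e : ((Fin N₁ → Bool) × (Fin N₂ → Bool)) → ((Fin N₁ → Bool) × (Fin N₂ → Bool)) :=
        fun a => (fun i => a.1 i == b.1 i, fun j => a.2 j == b.2 j) with he_def
      have he : Function.Involutive e := by
        intro a
        ext
        · exact beq_invol _ _
        · exact beq_invol _ _
      refine (Fintype.sum_bijective e he.bijective _ _ fun a => ?_).symm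
      simp only [he_def]
      simp only [spin_beq]
    rw [Finset.sum_congr rfl fun b _ => hgauge b, Finset.sum_const, Finset.card_univ,
      nsmul_eq_mul, Fintype.card_prod, Fintype.card_fun, Fintype.card_fun,
      Fintype.card_fin, Fintype.card_fin, Fintype.card_bool]
    push_cast
    rw [pow_add]
  -- Step 5 : identify the Curie-Weiss sum
  have hTT : (∑ a : (Fin N₁ → Bool) × (Fin N₂ → Bool),
        Real.exp (c ^ 2 * (∑ i, spin (a.1 i)) * (∑ j, spin (a.2 j))))
      = ∑ σ : Fin N₁ → Bool, ∑ τ : Fin N₂ → Bool,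
          Real.exp (2 * β ^ 2 * N * αN * (1 - αN) * mag σ * mag τ) := by
    rw [Fintype.sum_prod_type]
    refine Finset.sum_congr rfl fun σ _ => Finset.sum_congr rfl fun τ _ => ?_
    congr 1
    simp only [mag]
    rw [hc2, hα, hNdef]
    have h1 : (N₁:ℝ) ≠ 0 := hN1.ne'
    have h2 : (N₂:ℝ) ≠ 0 := hN2.ne'
    have h0 : ((N₁:ℝ) + N₂) ≠ 0 := by rw [← hNdef]; exact hN.ne'
    field_simp
    ring
  -- Step 6 : final algebra
  rw [hI1, hI2, hTT]
  have hep : Real.exp ((N₁ * N₂ : ℝ) * c ^ 2 / 2) ^ 2 = Real.exp ((N₁ * N₂ : ℝ) * c ^ 2) := by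
    rw [sq, ← Real.exp_add]
    congr 1
    ring
  rw [mul_pow, hep]
  have h2 : ((2:ℝ) ^ (N₁ + N₂)) ≠ 0 := by positivity
  have he : Real.exp ((N₁ * N₂ : ℝ) * c ^ 2) ≠ 0 := Real.exp_ne_zero _
  field_simp
end

section
/- If 4β⁴α(1-α) ≤ 1, then the only solution in [0,1]² of the replica-symmetric self-consistency system q̄ = E_g[tanh²(gβ√(2(1-α)p̄))], p̄ = E_g[tanh²(gβ√(2α q̄))] is q̄ = p̄ = 0. -/
open MeasureTheory ProbabilityTheory Real

lemma continuous_tanh' : Continuous Real.tanh := by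
  have : Real.tanh = fun x => Real.sinh x / Real.cosh x :=
    funext fun x => Real.tanh_eq_sinh_div_cosh x
  rw [this]
  exact Real.continuous_sinh.div Real.continuous_cosh fun x => (Real.cosh_pos x).ne'

lemma tanh_lt_self {x : ℝ} (hx : 0 < x) : Real.tanh x < x := by
  have hF : StrictMonoOn (fun y => y * Real.cosh y - Real.sinh y) (Set.Ici 0) := by
    apply strictMonoOn_of_deriv_pos (convex_Ici _)
    · exact ((continuous_id.mul Real.continuous_cosh).sub Real.continuous_sinh).continuousOn
    · intro y hy
      rw [interior_Ici, Set.mem_Ioi] at hy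
      have hd : HasDerivAt (fun y => y * Real.cosh y - Real.sinh y) (y * Real.sinh y) y := by
        have := ((hasDerivAt_id y).mul (Real.hasDerivAt_cosh y)).sub (Real.hasDerivAt_sinh y)
        refine this.congr_deriv ?_
        simp only [id_eq]
        ring
      rw [hd.deriv]
      exact mul_pos hy (Real.sinh_pos_iff.2 hy)
  have hFx := hF (Set.self_mem_Ici) (le_of_lt hx : (0:ℝ) ≤ x) hx
  simp only [Real.cosh_zero, Real.sinh_zero, zero_mul, sub_zero, mul_one] at hFx
  have hlt : Real.sinh x < x * Real.cosh x := by linarith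
  rw [Real.tanh_eq_sinh_div_cosh, div_lt_iff₀ (Real.cosh_pos x)]
  linarith

lemma tanh_sq_lt_sq {x : ℝ} (hx : x ≠ 0) : Real.tanh x ^ 2 < x ^ 2 := by
  have habs : Real.tanh x ^ 2 = Real.tanh |x| ^ 2 := by
    rcases abs_cases x with ⟨h, _⟩ | ⟨h, _⟩
    · rw [h]
    · rw [h, Real.tanh_neg, neg_sq]
  have hpos : 0 < |x| := abs_pos.2 hx
  have h1 : Real.tanh |x| < |x| := tanh_lt_self hpos
  have h2 : 0 ≤ Real.tanh |x| := by
    rw [Real.tanh_eq_sinh_div_cosh]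
    exact div_nonneg (Real.sinh_nonneg_iff.2 (abs_nonneg x)) (Real.cosh_pos _).le
  calc Real.tanh x ^ 2 = Real.tanh |x| ^ 2 := habs
    _ < |x| ^ 2 := by apply pow_lt_pow_left₀ h1 h2; norm_num
    _ = x ^ 2 := sq_abs x

lemma tanh_sq_le_sq (x : ℝ) : Real.tanh x ^ 2 ≤ x ^ 2 := by
  rcases eq_or_ne x 0 with rfl | hx
  · simp
  · exact (tanh_sq_lt_sq hx).le

lemma integral_sq_exp : ∫ x : ℝ, x ^ 2 * Real.exp (-x ^ 2 / 2) = Real.sqrt (2 * Real.pi) := by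
  have hint2 : Integrable (fun x : ℝ => Real.exp (-(1/2 : ℝ) * x ^ 2)) := by
    exact integrable_exp_neg_mul_sq (by norm_num)
  have hint1 : Integrable (fun x : ℝ => x ^ 2 * Real.exp (-(1/2 : ℝ) * x ^ 2)) := by
    have := integrable_rpow_mul_exp_neg_mul_sq (b := 1/2) (by norm_num) (s := 2) (by norm_num)
    apply this.congr
    filter_upwards with x
    rw [Real.rpow_two]
  -- FTC on f(x) = -x * exp(-x²/2)
  have hderiv : ∀ x : ℝ, HasDerivAt (fun y : ℝ => -y * Real.exp (-(1/2 : ℝ) * y ^ 2))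
      (x ^ 2 * Real.exp (-(1/2 : ℝ) * x ^ 2) - Real.exp (-(1/2 : ℝ) * x ^ 2)) x := by
    intro x
    have h1 : HasDerivAt (fun y : ℝ => -(1/2 : ℝ) * y ^ 2) (-(1/2 : ℝ) * (2 * x)) x := by
      simpa using ((hasDerivAt_pow 2 x).const_mul (-(1/2 : ℝ)))
    have h2 := h1.exp
    have h3 := ((hasDerivAt_id x).neg).mul h2
    refine h3.congr_deriv ?_
    simp only [Pi.neg_apply, id_eq]
    ring
  have htend : Filter.Tendsto (fun y : ℝ => -y * Real.exp (-(1/2 : ℝ) * y ^ 2))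
      Filter.atTop (nhds 0) := by
    have h := rpow_mul_exp_neg_mul_sq_isLittleO_exp_neg (b := 1/2) (by norm_num) 1
    have hhalf : Filter.Tendsto (fun x : ℝ => (1/2 : ℝ) * x) Filter.atTop Filter.atTop :=
      Filter.Tendsto.const_mul_atTop (by norm_num) Filter.tendsto_id
    have h2 := Real.tendsto_exp_neg_atTop_nhds_zero.comp hhalf
    have h2' : Filter.Tendsto (fun x : ℝ => Real.exp (-(1/2 : ℝ) * x)) Filter.atTop (nhds 0) := by
      simpa [Function.comp_def, neg_mul] using h2
    have h3 := h.tendsto_zero_of_tendsto h2'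
    have : (fun y : ℝ => -y * Real.exp (-(1/2 : ℝ) * y ^ 2)) =ᶠ[Filter.atTop]
        fun y => -(y ^ (1:ℝ) * Real.exp (-(1/2 : ℝ) * y ^ 2)) := by
      filter_upwards [Filter.eventually_ge_atTop (0:ℝ)] with y hy
      rw [Real.rpow_one]; ring
    rw [Filter.tendsto_congr' this]
    simpa using h3.neg
  have hbot : Filter.Tendsto (fun y : ℝ => -y * Real.exp (-(1/2 : ℝ) * y ^ 2))
      Filter.atBot (nhds 0) := by
    have h := (htend.comp Filter.tendsto_neg_atBot_atTop).neg
    rw [neg_zero] at h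
    apply h.congr
    intro y
    simp only [Function.comp_apply, neg_neg, neg_sq]
    ring
  have key := integral_of_hasDerivAt_of_tendsto hderiv (hint1.sub hint2) hbot htend
  simp only [sub_zero, sub_self] at key
  have split : ∫ x : ℝ, (x ^ 2 * Real.exp (-(1/2 : ℝ) * x ^ 2) - Real.exp (-(1/2 : ℝ) * x ^ 2))
      = (∫ x : ℝ, x ^ 2 * Real.exp (-(1/2 : ℝ) * x ^ 2)) - ∫ x : ℝ, Real.exp (-(1/2 : ℝ) * x ^ 2) :=
    integral_sub hint1 hint2
  rw [split] at key
  have hg : ∫ x : ℝ, Real.exp (-(1/2 : ℝ) * x ^ 2) = Real.sqrt (2 * Real.pi) := by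
    rw [integral_gaussian]
    congr 1
    field_simp
  have hval : ∫ x : ℝ, x ^ 2 * Real.exp (-(1/2 : ℝ) * x ^ 2) = Real.sqrt (2 * Real.pi) := by
    linarith
  have hfun : (fun x : ℝ => x ^ 2 * Real.exp (-x ^ 2 / 2))
      = fun x : ℝ => x ^ 2 * Real.exp (-(1/2 : ℝ) * x ^ 2) := by
    funext x
    congr 2
    ring
  rw [hfun, hval]

lemma pdf_smul_integral (f : ℝ → ℝ) :
    ∫ g, f g ∂(gaussianReal 0 1) = ∫ x : ℝ, gaussianPDFReal 0 1 x * f x := by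
  rw [gaussianReal_of_var_ne_zero 0 one_ne_zero]
  have hmeas : Measurable fun x => (gaussianPDFReal 0 1 x).toNNReal :=
    (measurable_gaussianPDFReal 0 1).real_toNNReal
  have heq : gaussianPDF 0 1 = fun x => ((gaussianPDFReal 0 1 x).toNNReal : ENNReal) := by
    funext x; rfl
  rw [heq, integral_withDensity_eq_integral_smul hmeas]
  congr 1 with x
  rw [NNReal.smul_def, smul_eq_mul, Real.coe_toNNReal _ (gaussianPDFReal_nonneg 0 1 x)]

lemma gaussian_moment2 : ∫ g : ℝ, g ^ 2 ∂(gaussianReal 0 1) = 1 := by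
  rw [pdf_smul_integral]
  have : ∀ x : ℝ, gaussianPDFReal 0 1 x * x ^ 2
      = (Real.sqrt (2 * Real.pi))⁻¹ * (x ^ 2 * Real.exp (-x ^ 2 / 2)) := by
    intro x
    rw [gaussianPDFReal]
    push_cast
    ring_nf
  rw [integral_congr_ae (Filter.Eventually.of_forall this), integral_const_mul, integral_sq_exp,
    inv_mul_cancel₀]
  positivity

lemma integrable_sq_gaussian : Integrable (fun g : ℝ => g ^ 2) (gaussianReal 0 1) := by
  rw [gaussianReal_of_var_ne_zero 0 one_ne_zero]
  have hmeas : Measurable fun x => (gaussianPDFReal 0 1 x).toNNReal :=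
    (measurable_gaussianPDFReal 0 1).real_toNNReal
  have heq : gaussianPDF 0 1 = fun x => ((gaussianPDFReal 0 1 x).toNNReal : ENNReal) := by
    funext x; rfl
  rw [heq, integrable_withDensity_iff_integrable_smul hmeas]
  have : (fun x : ℝ => (gaussianPDFReal 0 1 x).toNNReal • x ^ 2)
      = fun x => (Real.sqrt (2 * Real.pi))⁻¹ * (x ^ 2 * Real.exp (-(1/2 : ℝ) * x ^ 2)) := by
    funext x
    rw [NNReal.smul_def, smul_eq_mul, Real.coe_toNNReal _ (gaussianPDFReal_nonneg 0 1 x),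
      gaussianPDFReal]
    push_cast
    ring_nf
  rw [this]
  apply Integrable.const_mul
  have := integrable_rpow_mul_exp_neg_mul_sq (b := 1/2) (by norm_num) (s := 2) (by norm_num)
  apply this.congr
  filter_upwards with x
  rw [Real.rpow_two]

lemma integrable_tanh_sq (c : ℝ) :
    Integrable (fun g : ℝ => Real.tanh (g * c) ^ 2) (gaussianReal 0 1) := by
  have hc : Continuous fun g : ℝ => Real.tanh (g * c) ^ 2 :=
    (continuous_tanh'.comp (continuous_id.mul continuous_const)).pow 2
  apply Integrable.mono' (integrable_const (1 : ℝ)) hc.aestronglyMeasurable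
  filter_upwards with g
  rw [Real.norm_eq_abs, abs_of_nonneg (sq_nonneg _)]
  have h1 : |Real.tanh (g * c)| ≤ 1 := by
    rw [Real.tanh_eq_sinh_div_cosh, abs_div, abs_of_pos (Real.cosh_pos _),
      div_le_one (Real.cosh_pos _), Real.abs_sinh]
    exact (Real.sinh_lt_cosh _).le.trans (by rw [Real.cosh_abs])
  calc Real.tanh (g * c) ^ 2 = |Real.tanh (g * c)| ^ 2 := (sq_abs _).symm
    _ ≤ 1 ^ 2 := by apply pow_le_pow_left₀ (abs_nonneg _) h1
    _ = 1 := one_pow 2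

lemma gaussian_compl_zero : (gaussianReal 0 1) ({0}ᶜ : Set ℝ) = 1 := by
  have h0 : (gaussianReal 0 1) ({0} : Set ℝ) = 0 := by
    apply gaussianReal_absolutelyContinuous 0 one_ne_zero
    simp
  rw [measure_compl (measurableSet_singleton 0) (by rw [h0]; exact ENNReal.zero_ne_top),
    h0, measure_univ, tsub_zero]

lemma key_lt (c : ℝ) (hc : c ≠ 0) :
    (∫ g : ℝ, Real.tanh (g * c) ^ 2 ∂(gaussianReal 0 1)) < c ^ 2 := by
  have hint1 := integrable_tanh_sq c
  have hint2 : Integrable (fun g : ℝ => (g * c) ^ 2) (gaussianReal 0 1) := by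
    have : (fun g : ℝ => (g * c) ^ 2) = fun g => c ^ 2 * g ^ 2 := by funext g; ring
    rw [this]
    exact integrable_sq_gaussian.const_mul _
  have hsq : ∫ g : ℝ, (g * c) ^ 2 ∂(gaussianReal 0 1) = c ^ 2 := by
    have : (fun g : ℝ => (g * c) ^ 2) = fun g => c ^ 2 * g ^ 2 := by funext g; ring
    rw [this, integral_const_mul, gaussian_moment2, mul_one]
  have hpos : 0 < ∫ g : ℝ, ((g * c) ^ 2 - Real.tanh (g * c) ^ 2) ∂(gaussianReal 0 1) := by
    have hnn : ∀ g : ℝ, (0:ℝ) ≤ (g * c) ^ 2 - Real.tanh (g * c) ^ 2 := fun g => by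
      have := tanh_sq_le_sq (g * c)
      linarith
    have hintsub : Integrable (fun g : ℝ => (g * c) ^ 2 - Real.tanh (g * c) ^ 2)
        (gaussianReal 0 1) := hint2.sub hint1
    rw [integral_pos_iff_support_of_nonneg hnn hintsub]
    have hsub : ({0}ᶜ : Set ℝ) ⊆
        Function.support fun g => (g * c) ^ 2 - Real.tanh (g * c) ^ 2 := by
      intro g hg
      have hg0 : g ≠ 0 := hg
      have hgc : g * c ≠ 0 := mul_ne_zero hg0 hc
      have := tanh_sq_lt_sq hgc
      simp only [Function.mem_support]
      intro habs
      linarith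
    calc (0 : ENNReal) < 1 := by norm_num
      _ = (gaussianReal 0 1) ({0}ᶜ : Set ℝ) := gaussian_compl_zero.symm
      _ ≤ _ := measure_mono hsub
  rw [integral_sub hint2 hint1, hsq] at hpos
  linarith

theorem RS_high_temperature_trivial_solution (α β q p : ℝ)
    (hα : α ∈ Set.Ioo (0 : ℝ) 1) (hβ : 0 < β)
    (hcond : 4 * β ^ 4 * α * (1 - α) ≤ 1)
    (hqmem : q ∈ Set.Icc (0 : ℝ) 1) (hpmem : p ∈ Set.Icc (0 : ℝ) 1)
    (hq : q = ∫ g : ℝ, (Real.tanh (g * β * Real.sqrt (2 * (1 - α) * p))) ^ 2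
        ∂(gaussianReal 0 1))
    (hp : p = ∫ g : ℝ, (Real.tanh (g * β * Real.sqrt (2 * α * q))) ^ 2
        ∂(gaussianReal 0 1)) :
    q = 0 ∧ p = 0 := by
  obtain ⟨hα0, hα1⟩ := hα
  obtain ⟨hq0, hq1⟩ := hqmem
  obtain ⟨hp0, hp1⟩ := hpmem
  by_cases hqz : q = 0
  · refine ⟨hqz, ?_⟩
    rw [hp, hqz]
    simp
  by_cases hpz : p = 0
  · exfalso
    apply hqz
    rw [hq, hpz]
    simp
  -- both positive
  exfalso
  have hqpos : 0 < q := lt_of_le_of_ne hq0 (Ne.symm hqz)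
  have hppos : 0 < p := lt_of_le_of_ne hp0 (Ne.symm hpz)
  have hc1 : β * Real.sqrt (2 * (1 - α) * p) ≠ 0 := by
    apply mul_ne_zero hβ.ne'
    apply (Real.sqrt_pos.2 _).ne'
    have : 0 < 1 - α := by linarith
    positivity
  have hc2 : β * Real.sqrt (2 * α * q) ≠ 0 := by
    apply mul_ne_zero hβ.ne'
    apply (Real.sqrt_pos.2 _).ne'
    positivity
  have h1 : q < (β * Real.sqrt (2 * (1 - α) * p)) ^ 2 := by
    have hfun : (fun g : ℝ => Real.tanh (g * β * Real.sqrt (2 * (1 - α) * p)) ^ 2)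
        = fun g : ℝ => Real.tanh (g * (β * Real.sqrt (2 * (1 - α) * p))) ^ 2 := by
      funext g
      rw [mul_assoc]
    rw [hq, hfun]
    exact key_lt _ hc1
  have h2 : p < (β * Real.sqrt (2 * α * q)) ^ 2 := by
    have hfun : (fun g : ℝ => Real.tanh (g * β * Real.sqrt (2 * α * q)) ^ 2)
        = fun g : ℝ => Real.tanh (g * (β * Real.sqrt (2 * α * q))) ^ 2 := by
      funext g
      rw [mul_assoc]
    rw [hp, hfun]
    exact key_lt _ hc2
  have hs1 : (β * Real.sqrt (2 * (1 - α) * p)) ^ 2 = β ^ 2 * (2 * (1 - α) * p) := by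
    rw [mul_pow, Real.sq_sqrt]
    have : 0 < 1 - α := by linarith
    positivity
  have hs2 : (β * Real.sqrt (2 * α * q)) ^ 2 = β ^ 2 * (2 * α * q) := by
    rw [mul_pow, Real.sq_sqrt]
    positivity
  rw [hs1] at h1
  rw [hs2] at h2
  have hA : (0:ℝ) < β ^ 2 * (2 * (1 - α)) := by
    have h1a : (0:ℝ) < 1 - α := by linarith
    positivity
  have mu1 := mul_lt_mul_of_pos_left h2 hA
  have mu2 := mul_le_mul_of_nonneg_right hcond hq0
  nlinarith [mu1, mu2, h1]
end
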